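/- Let n ≥ 3 be odd and T(x) = (x^n - 1)/(x - 1) in F_2[x]. Then the number W(T) of monic square-free divisors of T over F_2 satisfies W(T) ≤ 2^{(n+9)/5}. -/

import Mathlib

open Polynomial UniqueFactorizationMonoid


lemma zmod2_cases (a : ZMod 2) : a = 0 ∨ a = 1 := by revert a; decide

lemma deg1' (p : (ZMod 2)[X]) (hm : p.Monic) (h : p.natDegree = 1)
    (h0 : eval 0 p ≠ 0) (h1 : eval 1 p ≠ 0) : False := by
  have hp : p = X + C (p.coeff 0) := by
    conv_lhs => rw [hm.as_sum]; rw [h]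
    simp [Finset.sum_range_succ]
  rcases zmod2_cases (p.coeff 0) with hb | hb <;>
    rw [hp, hb] at h0 h1 <;>
    simp only [eval_add, eval_X, eval_C, map_zero, map_one, eval_zero, eval_one] at h0 h1 <;>
    revert h0 h1 <;> decide

lemma deg2 (p : (ZMod 2)[X]) (hm : p.Monic) (h : p.natDegree = 2)
    (h0 : eval 0 p ≠ 0) (h1 : eval 1 p ≠ 0) : p = X^2 + X + 1 := by
  have hp : p = X^2 + C (p.coeff 1) * X + C (p.coeff 0) := by
    conv_lhs => rw [hm.as_sum]; rw [h]
    simp [Finset.sum_range_succ]; ring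
  rcases zmod2_cases (p.coeff 1) with ha | ha <;> rcases zmod2_cases (p.coeff 0) with hb | hb <;>
    rw [hp, ha, hb] at h0 h1 ⊢ <;>
    simp only [eval_add, eval_mul, eval_pow, eval_X, eval_C, map_zero, map_one, eval_zero,
      eval_one, ne_eq] at h0 h1 ⊢ <;>
    first
      | ring1
      | (exfalso; revert h0 h1; decide)

lemma deg3 (p : (ZMod 2)[X]) (hm : p.Monic) (h : p.natDegree = 3)
    (h0 : eval 0 p ≠ 0) (h1 : eval 1 p ≠ 0) :
    p = X^3 + X + 1 ∨ p = X^3 + X^2 + 1 := by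
  have hp : p = X^3 + C (p.coeff 2) * X^2 + C (p.coeff 1) * X + C (p.coeff 0) := by
    conv_lhs => rw [hm.as_sum]; rw [h]
    simp [Finset.sum_range_succ]; ring
  rcases zmod2_cases (p.coeff 2) with hc | hc <;>
  rcases zmod2_cases (p.coeff 1) with ha | ha <;> rcases zmod2_cases (p.coeff 0) with hb | hb <;>
    rw [hp, hc, ha, hb] at h0 h1 ⊢ <;>
    simp only [eval_add, eval_mul, eval_pow, eval_X, eval_C, map_zero, map_one, eval_zero,
      eval_one, zero_mul, one_mul, add_zero, zero_add, ne_eq, not_true, eq_self_iff_true,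
      true_or, or_true] at h0 h1 ⊢ <;>
    first
      | trivial
      | (left; ring1)
      | (right; ring1)
      | (exfalso; revert h0 h1; decide)

lemma h2' : (2 : (ZMod 2)[X]) = 0 := by
  have h : ((2:ℕ) : (ZMod 2)[X]) = Polynomial.C ((2:ℕ) : ZMod 2) := by
    rw [Polynomial.C_eq_natCast]
  norm_num at h
  rw [h, show ((2:ZMod 2)) = 0 from rfl, map_zero]

lemma sq_factor : (X^4 + X^2 + 1 : (ZMod 2)[X]) = (X^2 + X + 1) * (X^2 + X + 1) := by
  linear_combination (-(X^3 + X^2 + X) : (ZMod 2)[X]) * h2'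

lemma deg4 (p : (ZMod 2)[X]) (hm : p.Monic) (h : p.natDegree = 4) (hirr : Irreducible p)
    (h0 : eval 0 p ≠ 0) (h1 : eval 1 p ≠ 0) :
    p = X^4 + X + 1 ∨ p = X^4 + X^3 + 1 ∨ p = X^4 + X^3 + X^2 + X + 1 := by
  have hp : p = X^4 + C (p.coeff 3) * X^3 + C (p.coeff 2) * X^2 + C (p.coeff 1) * X
      + C (p.coeff 0) := by
    conv_lhs => rw [hm.as_sum]; rw [h]
    simp [Finset.sum_range_succ]; ring
  have hne : p ≠ X^4 + X^2 + 1 := by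
    intro he
    have hq : ¬ IsUnit (X^2 + X + 1 : (ZMod 2)[X]) := by
      intro hu
      have := Polynomial.natDegree_eq_zero_of_isUnit hu
      rw [show (X^2 + X + 1 : (ZMod 2)[X]).natDegree = 2 by compute_degree!] at this
      omega
    rcases hirr.2 (he.trans sq_factor) with h | h <;> exact hq h
  rcases zmod2_cases (p.coeff 3) with h3 | h3 <;>
  rcases zmod2_cases (p.coeff 2) with hc | hc <;>
  rcases zmod2_cases (p.coeff 1) with ha | ha <;>
  rcases zmod2_cases (p.coeff 0) with hb | hb <;>
    rw [hp, h3, hc, ha, hb] at h0 h1 hne ⊢ <;>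
    simp only [eval_add, eval_mul, eval_pow, eval_X, eval_C, map_zero, map_one, eval_zero,
      eval_one, zero_mul, one_mul, add_zero, zero_add, ne_eq, not_true, eq_self_iff_true, true_or, or_true] at h0 h1 hne ⊢ <;>
    first
      | (left; ring1)
      | (right; left; ring1)
      | (right; right; ring1)
      | (exfalso; exact hne (by ring1))
      | (exfalso; revert h0 h1; decide)


/-- For odd `n ≥ 3` and `T = (x^n-1)/(x-1)` over `F_2`, the number `W(T)` of monic
squarefree divisors of `T` satisfies `W(T) ≤ 2^{(n+9)/5}`. -/
theorem stmt_6 (n : ℕ) (hn : 3 ≤ n) (hodd : Odd n)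
    (T : Polynomial (ZMod 2)) (hT : T = ∑ i ∈ Finset.range n, X ^ i) :
    ({d : Polynomial (ZMod 2) | d.Monic ∧ Squarefree d ∧ d ∣ T}.ncard : ℝ)
      ≤ (2 : ℝ) ^ (((n : ℝ) + 9) / 5) := by
  have hTm : T.Monic := by rw [hT]; exact monic_geom_sum_X (by omega)
  have hT0 : T ≠ 0 := hTm.ne_zero
  have he0 : eval 0 T = 1 := by
    rw [hT, eval_geom_sum]
    rw [Finset.sum_eq_single 0 (by intro b _ hb; simp [zero_pow hb]) (by intro h; simp at h; omega)]
    simp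
  have he1 : eval 1 T = 1 := by
    rw [hT, eval_geom_sum]
    simp only [one_pow, Finset.sum_const, Finset.card_range, nsmul_eq_mul, mul_one]
    obtain ⟨k, hk⟩ := hodd
    subst hk
    push_cast
    simp [show (2:ZMod 2) = 0 from rfl]
  have hdeg : T.natDegree = n - 1 := by
    rw [hT]
    apply le_antisymm
    · apply natDegree_sum_le_of_forall_le
      intro i hi
      simp only [natDegree_X_pow]
      exact Nat.le_sub_one_of_lt (Finset.mem_range.mp hi)
    · apply le_natDegree_of_ne_zero
      rw [finset_sum_coeff]
      rw [Finset.sum_eq_single (n-1) (by intro b _ hb; simp [coeff_X_pow]; omega)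
        (by intro h; exfalso; apply h; simp; omega)]
      simp [coeff_X_pow]
  classical
  set F : Finset ((ZMod 2)[X]) := (normalizedFactors T).toFinset with hF
  have hmonF : ∀ (q x : (ZMod 2)[X]), q ∈ normalizedFactors x → q.Monic := by
    intro q x hq
    have h1 := normalize_normalized_factor q hq
    have h2 : q ≠ 0 := (irreducible_of_normalized_factor q hq).ne_zero
    rw [← h1]
    exact monic_normalize h2
  have hcount : 5 * F.card ≤ n + 9 := by
    have hPmem : ∀ p ∈ F, p.Monic ∧ Irreducible p ∧ p ∣ T := by
      intro p hp
      rw [hF, Multiset.mem_toFinset] at hp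
      exact ⟨hmonF p T hp, irreducible_of_normalized_factor p hp,
        dvd_of_mem_normalizedFactors hp⟩
    have hev : ∀ p ∈ F, eval 0 p ≠ 0 ∧ eval 1 p ≠ 0 := by
      intro p hp
      obtain ⟨_, _, hdvd⟩ := hPmem p hp
      obtain ⟨c, hc⟩ := hdvd
      constructor <;> intro h
      · have h' := congrArg (eval 0) hc
        rw [eval_mul, h, zero_mul, he0] at h'
        exact one_ne_zero h'
      · have h' := congrArg (eval 1) hc
        rw [eval_mul, h, zero_mul, he1] at h'
        exact one_ne_zero h'
    have hdeg2 : ∀ p ∈ F, 2 ≤ p.natDegree := by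
      intro p hp
      obtain ⟨hm, hirr, _⟩ := hPmem p hp
      obtain ⟨h0, h1⟩ := hev p hp
      have h1' : 0 < p.natDegree := hirr.natDegree_pos
      by_contra hlt
      exact deg1' p hm (by omega) h0 h1
    have hsum : ∑ p ∈ F, p.natDegree ≤ n - 1 := by
      have hMprod : (normalizedFactors T).prod = T := by
        apply eq_of_monic_of_associated _ hTm (prod_normalizedFactors hT0)
        rw [← Multiset.map_id (normalizedFactors T)]
        exact monic_multiset_prod_of_monic _ id (fun q hq => hmonF q T hq)
      have hTdeg : ((normalizedFactors T).map natDegree).sum = n - 1 := by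
        rw [← hdeg]
        conv_rhs => rw [← hMprod]
        exact (natDegree_multiset_prod_of_monic _ (fun q hq => hmonF q T hq)).symm
      have hle : F.val.map natDegree ≤ (normalizedFactors T).map natDegree := by
        apply Multiset.map_le_map
        exact Multiset.dedup_le _
      have h2 : (F.val.map natDegree).sum ≤ ((normalizedFactors T).map natDegree).sum := by
        obtain ⟨u, hu⟩ := Multiset.le_iff_exists_add.mp hle
        rw [hu]; simp
      calc ∑ p ∈ F, p.natDegree = (F.val.map natDegree).sum := rfl
        _ ≤ ((normalizedFactors T).map natDegree).sum := h2
        _ = n - 1 := hTdeg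
    set t2 : Finset ((ZMod 2)[X]) := {X^2 + X + 1} with ht2
    set t3 : Finset ((ZMod 2)[X]) := {X^3 + X + 1, X^3 + X^2 + 1} with ht3
    set t4 : Finset ((ZMod 2)[X]) := {X^4 + X + 1, X^4 + X^3 + 1, X^4 + X^3 + X^2 + X + 1}
      with ht4
    have hbonus : ∀ p ∈ F, 5 ≤ p.natDegree + ((if p ∈ t2 then 3 else 0)
        + (if p ∈ t3 then 2 else 0) + (if p ∈ t4 then 1 else 0)) := by
      intro p hp
      obtain ⟨hm, hirr, _⟩ := hPmem p hp
      obtain ⟨h0, h1⟩ := hev p hp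
      have h2 := hdeg2 p hp
      rcases Nat.lt_or_ge p.natDegree 5 with h5 | h5
      · interval_cases hdn : p.natDegree
        · have := deg2 p hm hdn h0 h1
          have : p ∈ t2 := by rw [ht2]; simp [this]
          simp only [this, if_pos]
          split_ifs <;> omega
        · have := deg3 p hm hdn h0 h1
          have : p ∈ t3 := by rw [ht3]; simp; tauto
          simp only [this, if_pos]
          split_ifs <;> omega
        · have := deg4 p hm hdn hirr h0 h1
          have : p ∈ t4 := by rw [ht4]; simp; tauto
          simp only [this, if_pos]
          split_ifs <;> omega
      · omega
    have hsb : ∀ (t : Finset ((ZMod 2)[X])) (c : ℕ),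
        ∑ p ∈ F, (if p ∈ t then c else 0) ≤ c * t.card := by
      intro t c
      rw [Finset.sum_ite_mem]
      rw [Finset.sum_const, smul_eq_mul]
      have : (F ∩ t).card ≤ t.card := Finset.card_le_card (Finset.inter_subset_right)
      calc (F ∩ t).card * c ≤ t.card * c := Nat.mul_le_mul_right c this
        _ = c * t.card := Nat.mul_comm _ _
    have hmain : 5 * F.card ≤ (n - 1) + 10 := by
      have h1 : 5 * F.card = ∑ _p ∈ F, 5 := by
        rw [Finset.sum_const, smul_eq_mul, Nat.mul_comm]
      have h2 : ∑ p ∈ F, (5:ℕ) ≤ ∑ p ∈ F, (p.natDegree + ((if p ∈ t2 then 3 else 0)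
          + (if p ∈ t3 then 2 else 0) + (if p ∈ t4 then 1 else 0))) :=
        Finset.sum_le_sum hbonus
      have h3 : ∑ p ∈ F, (p.natDegree + ((if p ∈ t2 then 3 else 0)
          + (if p ∈ t3 then 2 else 0) + (if p ∈ t4 then 1 else 0)))
          = ∑ p ∈ F, p.natDegree + (∑ p ∈ F, (if p ∈ t2 then 3 else 0)
          + (∑ p ∈ F, (if p ∈ t3 then 2 else 0) + ∑ p ∈ F, (if p ∈ t4 then 1 else 0))) := by
        rw [Finset.sum_add_distrib, Finset.sum_add_distrib, Finset.sum_add_distrib]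
        ring
      have hb2 := hsb t2 3
      have hb3 := hsb t3 2
      have hb4 := hsb t4 1
      have hc2 : t2.card ≤ 1 := Finset.card_le_one.mpr (by simp [ht2])
      have hc3 : t3.card ≤ 2 := by
        rw [ht3]
        exact (Finset.card_insert_le _ _).trans (by simp)
      have hc4 : t4.card ≤ 3 := by
        rw [ht4]
        refine (Finset.card_insert_le _ _).trans ?_
        have := Finset.card_insert_le (X^4 + X^3 + 1 : (ZMod 2)[X])
          ({X^4 + X^3 + X^2 + X + 1} : Finset ((ZMod 2)[X]))
        simp at this ⊢
        omega
      omega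
    omega
  have hcard : ({d : Polynomial (ZMod 2) | d.Monic ∧ Squarefree d ∧ d ∣ T}).ncard ≤ 2 ^ F.card := by
    have hsub : {d : Polynomial (ZMod 2) | d.Monic ∧ Squarefree d ∧ d ∣ T}
        ⊆ ↑(F.powerset.image (fun s : Finset ((ZMod 2)[X]) => s.prod id)) := by
      rintro d ⟨hdm, hdsq, hddvd⟩
      have hd0 : d ≠ 0 := hdm.ne_zero
      set s : Finset ((ZMod 2)[X]) := (normalizedFactors d).toFinset with hs
      have hnd : (normalizedFactors d).Nodup :=
        (squarefree_iff_nodup_normalizedFactors hd0).mp hdsq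
      have hval : s.val = normalizedFactors d := Multiset.dedup_eq_self.mpr hnd
      have hsF : s ⊆ F := Multiset.toFinset_subset.mpr (Multiset.subset_of_le
        ((dvd_iff_normalizedFactors_le_normalizedFactors hd0 hT0).mp hddvd))
      have hprod : s.prod id = d := by
        have h1 : s.prod id = (normalizedFactors d).prod := by
          rw [Finset.prod_eq_multiset_prod, hval, Multiset.map_id]
        have h2 : Associated (normalizedFactors d).prod d := prod_normalizedFactors hd0
        have h3 : (normalizedFactors d).prod.Monic := by
          rw [← Multiset.map_id (normalizedFactors d)]
          exact monic_multiset_prod_of_monic _ id (fun q hq => hmonF q d hq)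
        rw [h1]
        exact eq_of_monic_of_associated h3 hdm h2
      simp only [Finset.coe_image, Set.mem_image, Finset.mem_coe, Finset.mem_powerset]
      exact ⟨s, by simpa using hsF, hprod⟩
    have h1 := Set.ncard_le_ncard hsub (Finset.finite_toSet _)
    rw [Set.ncard_coe_finset] at h1
    calc ({d : Polynomial (ZMod 2) | d.Monic ∧ Squarefree d ∧ d ∣ T}).ncard
        ≤ (F.powerset.image (fun s : Finset ((ZMod 2)[X]) => s.prod id)).card := h1
      _ ≤ F.powerset.card := Finset.card_image_le
      _ = 2 ^ F.card := Finset.card_powerset F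
  calc (({d : Polynomial (ZMod 2) | d.Monic ∧ Squarefree d ∧ d ∣ T}).ncard : ℝ)
      ≤ ((2 ^ F.card : ℕ) : ℝ) := by exact_mod_cast hcard
    _ = (2:ℝ) ^ (F.card : ℝ) := by rw [Real.rpow_natCast]; push_cast; ring
    _ ≤ (2 : ℝ) ^ (((n : ℝ) + 9) / 5) := by
        apply Real.rpow_le_rpow_of_exponent_le one_le_two
        rw [le_div_iff₀ (by norm_num)]
        have : ((5 * F.card : ℕ) : ℝ) ≤ ((n + 9 : ℕ) : ℝ) := by exact_mod_cast hcount
        push_cast at this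
        linarith
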